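/- Let (E,O) ⊨ T_convex, b realizing the special cut O < b < E^{>O}, and f an E-definable differentiable function. If f(b) belongs to the maximal ideal m_b of O_b = {y ∈ E⟨b⟩ : |y| < E^{>O}}, then f'(b) ∈ m_b. If f(b) belongs to the maximal ideal of the convex hull of O in E⟨b⟩, then f'(b) also belongs to that maximal ideal. -/

import Mathlib

open FirstOrder

section Preamble

universe u

variable {M : Type u}

/-- A unary function is definable (via its graph) with parameters from `A`. -/
def DefFun (L : FirstOrder.Language) [L.Structure M] (A : Set M) (f : M → M) : Prop :=
  A.Definable L {p : Fin 2 → M | f (p 0) = p 1}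

/-- A unary set is definable with parameters from `A`. -/
def DefSet (L : FirstOrder.Language) [L.Structure M] (A : Set M) (s : Set M) : Prop :=
  A.Definable L {p : Fin 1 → M | p 0 ∈ s}

/-- `c` is in the definable closure of `A`. -/
def InDcl (L : FirstOrder.Language) [L.Structure M] (A : Set M) (c : M) : Prop :=
  DefSet L A {c}

/-- `A` is closed under definable closure. -/
def DclClosed (L : FirstOrder.Language) [L.Structure M] (A : Set M) : Prop :=
  ∀ c : M, InDcl L A c → c ∈ A

/-- The definable closure of `A`. -/
def Dcl (L : FirstOrder.Language) [L.Structure M] (A : Set M) : Set M :=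
  {c : M | InDcl L A c}

/-- The order and field operations of `M` are `∅`-definable in `L`. -/
def FieldCompat (L : FirstOrder.Language) (M : Type u) [L.Structure M]
    [Field M] [LinearOrder M] [IsStrictOrderedRing M] : Prop :=
  (∅ : Set M).Definable L {p : Fin 2 → M | p 0 ≤ p 1} ∧
  (∅ : Set M).Definable L {p : Fin 3 → M | p 0 + p 1 = p 2} ∧
  (∅ : Set M).Definable L {p : Fin 3 → M | p 0 * p 1 = p 2}

/-- A set is a finite union of points and (possibly unbounded) open intervals. -/
def FinUnionIntervals [LinearOrder M] (s : Set M) : Prop :=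
  ∃ t : Finset (Set M),
    (∀ u ∈ t, (∃ a b : M, u = Set.Ioo a b) ∨ (∃ a : M, u = Set.Ioi a) ∨
      (∃ a : M, u = Set.Iio a) ∨ (∃ a : M, u = {a}) ∨ u = Set.univ) ∧
    s = ⋃₀ ↑t

/-- The structure `M` is o-minimal. -/
def IsOMin (L : FirstOrder.Language) (M : Type u) [L.Structure M] [LinearOrder M] : Prop :=
  ∀ s : Set M, DefSet L Set.univ s → FinUnionIntervals s

/-- An order-convex subring. -/
def ConvexSubring [Field M] [LinearOrder M] [IsStrictOrderedRing M] (O : Subring M) : Prop :=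
  ∀ a b : M, a ∈ O → |b| ≤ |a| → b ∈ O

/-- A `T`-convex subring: convex and closed under all `∅`-definable
total continuous unary functions. -/
def TConvexSubring (L : FirstOrder.Language) [L.Structure M] [Field M] [LinearOrder M] [IsStrictOrderedRing M]
    [TopologicalSpace M] [OrderTopology M] (O : Subring M) : Prop :=
  ConvexSubring O ∧
  ∀ f : M → M, DefFun L (∅ : Set M) f → Continuous f → ∀ x ∈ O, f x ∈ O

/-- The maximal ideal of a (convex) valuation subring, as a set. -/
def mIdealOf [DivisionRing M] (S : Set M) : Set M := {y : M | y ∈ S ∧ (y = 0 ∨ y⁻¹ ∉ S)}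

/-- Dominance: `x ≼ y` with respect to `O`. -/
def preceq [DivisionRing M] (O : Set M) (x y : M) : Prop :=
  (x = 0 ∧ y = 0) ∨ (y ≠ 0 ∧ x / y ∈ O)

/-- Strict dominance: `x ≺ y` with respect to `O`. -/
def prec [DivisionRing M] (O : Set M) (x y : M) : Prop :=
  y ≠ 0 ∧ x / y ∈ mIdealOf O

/-- Asymptotic equivalence `x ≍ y`. -/
def asymp [DivisionRing M] (O : Set M) (x y : M) : Prop :=
  preceq O x y ∧ preceq O y x

/-- `x ∼ y`, i.e. `x - y ≺ x`. -/
def simRel [DivisionRing M] (O : Set M) (x y : M) : Prop :=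
  prec O (x - y) x

/-- The convex hull of a set in an ordered field. -/
def CHull [Field M] [LinearOrder M] [IsStrictOrderedRing M] (O : Set M) : Set M := {y : M | ∃ o ∈ O, |y| ≤ o}

/-- `x` is weakly `O`-immediate over `E`: the set `val (x - E)` has no maximum. -/
def WeakIm [DivisionRing M] (O : Set M) (E : Set M) (x : M) : Prop :=
  ∀ c ∈ E, ∃ d ∈ E, prec O (x - d) (x - c)

/-- Derivative with respect to the order of the field. -/
def HasODerivAt [Field M] [LinearOrder M] [IsStrictOrderedRing M] (f : M → M) (a l : M) : Prop :=
  ∀ ε : M, 0 < ε → ∃ δ : M, 0 < δ ∧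
    ∀ t : M, t ≠ a → |t - a| < δ → |(f t - f a) / (t - a) - l| < ε

/-- The cut of `x` over `E`: the set of elements realizing the same cut as `x`. -/
def cutSet [Preorder M] (E : Set M) (x : M) : Set M :=
  {u : M | ∀ e ∈ E, (e < u ↔ e < x)}

/-- The canonical valuation ring `O_b = {y ∈ E⟨b⟩ : |y| < E^{>O}}` on `E⟨b⟩`. -/
def Oball (L : FirstOrder.Language) [L.Structure M] [Field M] [LinearOrder M] [IsStrictOrderedRing M]
    (E O : Set M) (b : M) : Set M :=
  {y : M | y ∈ Dcl L (E ∪ {b}) ∧ ∀ e ∈ E, (∀ o ∈ O, o < e) → |y| < e}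

/-- The convex hull `O_b⁻` of `O` in `E⟨b⟩`. -/
def OballMinus (L : FirstOrder.Language) [L.Structure M] [Field M] [LinearOrder M] [IsStrictOrderedRing M]
    (E O : Set M) (b : M) : Set M :=
  {y : M | y ∈ Dcl L (E ∪ {b}) ∧ ∃ o ∈ O, |y| ≤ o}

/-- `κ` bounds the cofinality of the weakly immediate type of `x` over `E`. -/
def CofBound [DivisionRing M] (O E : Set M) (x : M) (κ : Cardinal.{u}) : Prop :=
  ∃ D : Set M, D ⊆ E ∧ Cardinal.mk D ≤ κ ∧ ∀ c ∈ E, ∃ d ∈ D, preceq O (x - d) (x - c)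

end Preamble

section Stmt9Aux

open FirstOrder FirstOrder.Language Set

universe v

variable {L : FirstOrder.Language} {M : Type v} [L.Structure M] {A : Set M} {α : Type*} {m n : ℕ}

theorem defEq : A.Definable L {p : Fin 2 → M | p 0 = p 1} := by
  refine ⟨Term.equal (Term.var 0) (Term.var 1), ?_⟩
  ext p; simp

theorem defConst {c : M} (hc : c ∈ A) : A.Definable L {p : Fin 1 → M | p 0 = c} := by
  refine ⟨Term.equal (Term.var 0) (Constants.term (L.con ⟨c, hc⟩)), ?_⟩
  ext p; simp

theorem defExFin {s : Set ((α ⊕ Fin m) → M)} (h : A.Definable L s) :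
    A.Definable L {p : α → M | ∃ w : Fin m → M, Sum.elim p w ∈ s} := by
  have h2 := h.image_comp_sumInl_fin m
  convert h2 using 1
  ext p
  constructor
  · rintro ⟨w, hw⟩; exact ⟨Sum.elim p w, hw, Sum.elim_comp_inl _ _⟩
  · rintro ⟨g, hg, rfl⟩
    exact ⟨g ∘ Sum.inr, by rwa [Sum.elim_comp_inl_inr]⟩

theorem defPlug {s : Set (Fin n → M)} (h : A.Definable L s) (ρ : Fin n → α) :
    A.Definable L {p : α → M | p ∘ ρ ∈ s} := h.preimage_comp ρ

section OrderedAtoms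

variable [Field M] [LinearOrder M] [IsStrictOrderedRing M]

theorem defLT (hLE : A.Definable L {p : Fin 2 → M | p 0 ≤ p 1}) :
    A.Definable L {p : Fin 2 → M | p 0 < p 1} := by
  have h1 := defPlug (α := Fin 2) hLE ![1, 0]
  have h2 := hLE.inter h1.compl
  convert h2 using 1
  ext p
  simp only [mem_setOf_eq, mem_inter_iff, mem_compl_iff, Function.comp_apply,
    Matrix.cons_val_zero, Matrix.cons_val_one, Matrix.head_cons]
  exact lt_iff_le_not_ge

theorem defPosSum (hLE : A.Definable L {p : Fin 2 → M | p 0 ≤ p 1})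
    (hADD : A.Definable L {p : Fin 3 → M | p 0 + p 1 = p 2}) :
    A.Definable L {p : Fin 2 → M | 0 < p 0 + p 1} := by
  have c1 := defPlug (α := Fin 2 ⊕ Fin 2) hADD ![Sum.inr 0, Sum.inr 0, Sum.inr 0]
  have c2 := defPlug (α := Fin 2 ⊕ Fin 2) hADD ![Sum.inl 0, Sum.inl 1, Sum.inr 1]
  have c3 := defPlug (α := Fin 2 ⊕ Fin 2) (defLT hLE) ![Sum.inr 0, Sum.inr 1]
  have h := defExFin (c1.inter (c2.inter c3))
  convert h using 1
  ext p
  simp only [mem_setOf_eq, mem_inter_iff, Function.comp, Matrix.cons_val_zero,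
    Matrix.cons_val_one, Matrix.head_cons, Matrix.cons_val_two, Matrix.tail_cons,
    Sum.elim_inl, Sum.elim_inr]
  constructor
  · intro hp
    refine ⟨![0, p 0 + p 1], by simp, by simp, by simpa⟩
  · rintro ⟨w, h1, h2, h3⟩
    have hz : w 0 = 0 := by linarith
    rw [hz] at h3; rw [h2]; exact h3

theorem defNonnegSum (hLE : A.Definable L {p : Fin 2 → M | p 0 ≤ p 1})
    (hADD : A.Definable L {p : Fin 3 → M | p 0 + p 1 = p 2}) :
    A.Definable L {p : Fin 2 → M | 0 ≤ p 0 + p 1} := by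
  have c1 := defPlug (α := Fin 2 ⊕ Fin 2) hADD ![Sum.inr 0, Sum.inr 0, Sum.inr 0]
  have c2 := defPlug (α := Fin 2 ⊕ Fin 2) hADD ![Sum.inl 0, Sum.inl 1, Sum.inr 1]
  have c3 := defPlug (α := Fin 2 ⊕ Fin 2) hLE ![Sum.inr 0, Sum.inr 1]
  have h := defExFin (c1.inter (c2.inter c3))
  convert h using 1
  ext p
  simp only [mem_setOf_eq, mem_inter_iff, Function.comp, Matrix.cons_val_zero,
    Matrix.cons_val_one, Matrix.head_cons, Matrix.cons_val_two, Matrix.tail_cons,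
    Sum.elim_inl, Sum.elim_inr]
  constructor
  · intro hp
    refine ⟨![0, p 0 + p 1], by simp, by simp, by simpa⟩
  · rintro ⟨w, h1, h2, h3⟩
    have hz : w 0 = 0 := by linarith
    rw [hz] at h3; rw [h2]; exact h3

theorem defPos1 (hLE : A.Definable L {p : Fin 2 → M | p 0 ≤ p 1})
    (hADD : A.Definable L {p : Fin 3 → M | p 0 + p 1 = p 2}) :
    A.Definable L {p : Fin 1 → M | 0 < p 0} := by
  have c1 := defPlug (α := Fin 1 ⊕ Fin 1) hADD ![Sum.inr 0, Sum.inr 0, Sum.inr 0]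
  have c3 := defPlug (α := Fin 1 ⊕ Fin 1) (defLT hLE) ![Sum.inr 0, Sum.inl 0]
  have h := defExFin (c1.inter c3)
  convert h using 1
  ext p
  simp only [mem_setOf_eq, mem_inter_iff, Function.comp, Matrix.cons_val_zero,
    Matrix.cons_val_one, Matrix.head_cons, Matrix.cons_val_two, Matrix.tail_cons,
    Sum.elim_inl, Sum.elim_inr]
  constructor
  · intro hp
    exact ⟨![0], by simp, by simpa⟩
  · rintro ⟨w, h1, h3⟩
    have hz : w 0 = 0 := by linarith
    rw [hz] at h3; exact h3

theorem defAbsLT (hLE : A.Definable L {p : Fin 2 → M | p 0 ≤ p 1})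
    (hADD : A.Definable L {p : Fin 3 → M | p 0 + p 1 = p 2}) :
    A.Definable L {p : Fin 2 → M | |p 0| < p 1} := by
  have h := (defLT hLE).inter (defPosSum hLE hADD)
  convert h using 1
  ext p
  simp only [mem_setOf_eq, mem_inter_iff, abs_lt]
  constructor
  · rintro ⟨h1, h2⟩; exact ⟨h2, by linarith⟩
  · rintro ⟨h1, h2⟩; exact ⟨by linarith, h1⟩

theorem defAbsLE (hLE : A.Definable L {p : Fin 2 → M | p 0 ≤ p 1})
    (hADD : A.Definable L {p : Fin 3 → M | p 0 + p 1 = p 2}) :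
    A.Definable L {p : Fin 2 → M | |p 0| ≤ p 1} := by
  have h := hLE.inter (defNonnegSum hLE hADD)
  convert h using 1
  ext p
  simp only [mem_setOf_eq, mem_inter_iff, abs_le]
  constructor
  · rintro ⟨h1, h2⟩; exact ⟨h2, by linarith⟩
  · rintro ⟨h1, h2⟩; exact ⟨by linarith, h1⟩

end OrderedAtoms

section FunSets

variable [Field M] [LinearOrder M] [IsStrictOrderedRing M]

/-- The "difference quotient close to `l`" set: variables `(a, l, ε, t)`. -/
def closeSet (f : M → M) : Set (Fin 4 → M) :=
  {x | ∃ q : M, (x 3 - x 0) * q = f (x 3) - f (x 0) ∧ |q - x 1| < x 2}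

/-- The "bad witness `t`" set: variables `(a, l, ε, δ, t)`. -/
def badTSet (f : M → M) : Set (Fin 5 → M) :=
  {x | x 4 ≠ x 0 ∧ |x 4 - x 0| < x 3 ∧
    ¬ ∃ q : M, (x 4 - x 0) * q = f (x 4) - f (x 0) ∧ |q - x 1| < x 2}

/-- The "good `δ`" set: variables `(a, l, ε, δ)`. -/
def gdSet (f : M → M) : Set (Fin 4 → M) :=
  {x | 0 < x 3 ∧ ∀ t : M, ¬ (t ≠ x 0 ∧ |t - x 0| < x 3 ∧
    ¬ ∃ q : M, (t - x 0) * q = f t - f (x 0) ∧ |q - x 1| < x 2)}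

/-- The graph of order-differentiability. -/
def dgSet (f : M → M) : Set (Fin 2 → M) := {x | HasODerivAt f (x 0) (x 1)}

variable {f : M → M}

theorem defBnd (hc : FieldCompat L M) (hf : A.Definable L {p : Fin 2 → M | f (p 0) = p 1})
    {r : M} (hr : r ∈ A) : A.Definable L {p : Fin 1 → M | |f (p 0)| ≤ r} := by
  have hLE := hc.1.mono (empty_subset A)
  have hADD := hc.2.1.mono (empty_subset A)
  have c1 := defPlug (α := Fin 1 ⊕ Fin 2) hf ![Sum.inl 0, Sum.inr 0]
  have c2 := defPlug (α := Fin 1 ⊕ Fin 2) (defConst (L := L) hr) ![Sum.inr 1]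
  have c3 := defPlug (α := Fin 1 ⊕ Fin 2) (defAbsLE hLE hADD) ![Sum.inr 0, Sum.inr 1]
  have h := defExFin (c1.inter (c2.inter c3))
  convert h using 1
  ext p
  simp only [mem_setOf_eq, mem_inter_iff, Function.comp_apply, Matrix.cons_val_zero,
    Matrix.cons_val_one, Matrix.head_cons, Sum.elim_inl, Sum.elim_inr]
  constructor
  · intro hp
    exact ⟨![f (p 0), r], by simp, by simp, by simpa⟩
  · rintro ⟨w, h1, h2, h3⟩
    rw [h1, ← h2]; exact h3

theorem defGeConst {g : M → M} (hc : FieldCompat L M)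
    (hg : A.Definable L {p : Fin 2 → M | g (p 0) = p 1}) {K : M} (hK : K ∈ A) :
    A.Definable L {p : Fin 1 → M | K ≤ g (p 0)} := by
  have hLE := hc.1.mono (empty_subset A)
  have c1 := defPlug (α := Fin 1 ⊕ Fin 2) hg ![Sum.inl 0, Sum.inr 0]
  have c2 := defPlug (α := Fin 1 ⊕ Fin 2) (defConst (L := L) hK) ![Sum.inr 1]
  have c3 := defPlug (α := Fin 1 ⊕ Fin 2) hLE ![Sum.inr 1, Sum.inr 0]
  have h := defExFin (c1.inter (c2.inter c3))
  convert h using 1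
  ext p
  simp only [mem_setOf_eq, mem_inter_iff, Function.comp_apply, Matrix.cons_val_zero,
    Matrix.cons_val_one, Matrix.head_cons, Sum.elim_inl, Sum.elim_inr]
  constructor
  · intro hp
    exact ⟨![g (p 0), K], by simp, by simp, by simpa⟩
  · rintro ⟨w, h1, h2, h3⟩
    rw [h1, ← h2]; exact h3

theorem defLeConst {g : M → M} (hc : FieldCompat L M)
    (hg : A.Definable L {p : Fin 2 → M | g (p 0) = p 1}) {K : M} (hK : K ∈ A) :
    A.Definable L {p : Fin 1 → M | g (p 0) ≤ K} := by
  have hLE := hc.1.mono (empty_subset A)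
  have c1 := defPlug (α := Fin 1 ⊕ Fin 2) hg ![Sum.inl 0, Sum.inr 0]
  have c2 := defPlug (α := Fin 1 ⊕ Fin 2) (defConst (L := L) hK) ![Sum.inr 1]
  have c3 := defPlug (α := Fin 1 ⊕ Fin 2) hLE ![Sum.inr 0, Sum.inr 1]
  have h := defExFin (c1.inter (c2.inter c3))
  convert h using 1
  ext p
  simp only [mem_setOf_eq, mem_inter_iff, Function.comp_apply, Matrix.cons_val_zero,
    Matrix.cons_val_one, Matrix.head_cons, Sum.elim_inl, Sum.elim_inr]
  constructor
  · intro hp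
    exact ⟨![g (p 0), K], by simp, by simp, by simpa⟩
  · rintro ⟨w, h1, h2, h3⟩
    rw [h1, ← h2]; exact h3

theorem defClose (hc : FieldCompat L M)
    (hf : A.Definable L {p : Fin 2 → M | f (p 0) = p 1}) :
    A.Definable L (closeSet f) := by
  have hLE := hc.1.mono (empty_subset A)
  have hADD := hc.2.1.mono (empty_subset A)
  have hMUL := hc.2.2.mono (empty_subset A)
  -- auxiliary variables : 0:q, 1:fa, 2:ft, 3:d, 4:r, 5:s
  have c1 := defPlug (α := Fin 4 ⊕ Fin 6) hf ![Sum.inl 0, Sum.inr 1]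
  have c2 := defPlug (α := Fin 4 ⊕ Fin 6) hf ![Sum.inl 3, Sum.inr 2]
  have c3 := defPlug (α := Fin 4 ⊕ Fin 6) hADD ![Sum.inr 3, Sum.inl 0, Sum.inl 3]
  have c4 := defPlug (α := Fin 4 ⊕ Fin 6) hADD ![Sum.inr 5, Sum.inr 1, Sum.inr 2]
  have c5 := defPlug (α := Fin 4 ⊕ Fin 6) hMUL ![Sum.inr 3, Sum.inr 0, Sum.inr 5]
  have c6 := defPlug (α := Fin 4 ⊕ Fin 6) hADD ![Sum.inr 4, Sum.inl 1, Sum.inr 0]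
  have c7 := defPlug (α := Fin 4 ⊕ Fin 6) (defAbsLT hLE hADD) ![Sum.inr 4, Sum.inl 2]
  have h := defExFin (c1.inter (c2.inter (c3.inter (c4.inter (c5.inter (c6.inter c7))))))
  convert h using 1
  ext x
  simp only [closeSet, mem_setOf_eq, mem_inter_iff, Function.comp_apply, Matrix.cons_val_zero,
    Matrix.cons_val_one, Matrix.head_cons, Matrix.cons_val_two, Matrix.tail_cons,
    Sum.elim_inl, Sum.elim_inr]
  constructor
  · rintro ⟨q, hq, hr⟩
    refine ⟨![q, f (x 0), f (x 3), x 3 - x 0, q - x 1, f (x 3) - f (x 0)],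
      rfl, rfl, by show x 3 - x 0 + x 0 = x 3; ring,
      by show f (x 3) - f (x 0) + f (x 0) = f (x 3); ring,
      by show (x 3 - x 0) * q = f (x 3) - f (x 0); exact hq,
      by show q - x 1 + x 1 = q; ring,
      by show |q - x 1| < x 2; exact hr⟩
  · rintro ⟨w, h1, h2, h3, h4, h5, h6, h7⟩
    have e3 : w 3 = x 3 - x 0 := by linarith
    have e4 : w 5 = w 2 - w 1 := by linarith
    have e6 : w 4 = w 0 - x 1 := by linarith
    refine ⟨w 0, ?_, ?_⟩
    · rw [h1, h2, ← e4, ← e3]; exact h5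
    · rw [← e6]; exact h7

theorem defBadT (hc : FieldCompat L M)
    (hf : A.Definable L {p : Fin 2 → M | f (p 0) = p 1}) :
    A.Definable L (badTSet f) := by
  have hLE := hc.1.mono (empty_subset A)
  have hADD := hc.2.1.mono (empty_subset A)
  have cNE := (defPlug (α := Fin 5) (defEq (L := L) (A := A) (M := M)) ![4, 0]).compl
  have a1 := defPlug (α := Fin 5 ⊕ Fin 1) hADD ![Sum.inr 0, Sum.inl 0, Sum.inl 4]
  have a2 := defPlug (α := Fin 5 ⊕ Fin 1) (defAbsLT hLE hADD) ![Sum.inr 0, Sum.inl 3]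
  have cABS := defExFin (a1.inter a2)
  have cCL := (defPlug (α := Fin 5) (defClose hc hf) ![0, 1, 2, 4]).compl
  have h := cNE.inter (cABS.inter cCL)
  convert h using 1
  ext x
  simp only [badTSet, closeSet, mem_setOf_eq, mem_inter_iff, mem_compl_iff,
    Function.comp_apply, Matrix.cons_val_zero, Matrix.cons_val_one, Matrix.head_cons,
    Matrix.cons_val_two, Matrix.tail_cons, Matrix.cons_val_three, Sum.elim_inl, Sum.elim_inr]
  constructor
  · rintro ⟨h1, h2, h3⟩
    refine ⟨h1, ⟨![x 4 - x 0], by show x 4 - x 0 + x 0 = x 4; ring,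
      by show |x 4 - x 0| < x 3; exact h2⟩, fun hcl => h3 ?_⟩
    simpa only [closeSet, mem_setOf_eq, Function.comp_apply, Matrix.cons_val_zero,
      Matrix.cons_val_one, Matrix.head_cons, Matrix.cons_val_two, Matrix.tail_cons,
      Matrix.cons_val_three] using hcl
  · rintro ⟨h1, ⟨w, hw1, hw2⟩, h3⟩
    have hw : w 0 = x 4 - x 0 := by linarith
    rw [hw] at hw2
    refine ⟨h1, hw2, fun hex => h3 ?_⟩
    try simp only [closeSet, mem_setOf_eq, Function.comp_apply, Matrix.cons_val_zero,
      Matrix.cons_val_one, Matrix.head_cons, Matrix.cons_val_two, Matrix.tail_cons,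
      Matrix.cons_val_three]
    exact hex

theorem defGD (hc : FieldCompat L M)
    (hf : A.Definable L {p : Fin 2 → M | f (p 0) = p 1}) :
    A.Definable L (gdSet f) := by
  have hLE := hc.1.mono (empty_subset A)
  have hADD := hc.2.1.mono (empty_subset A)
  have cP := defPlug (α := Fin 4) (defPos1 hLE hADD) ![3]
  have cB := (defExFin (defPlug (α := Fin 4 ⊕ Fin 1) (defBadT hc hf)
    ![Sum.inl 0, Sum.inl 1, Sum.inl 2, Sum.inl 3, Sum.inr 0])).compl
  have h := cP.inter cB
  convert h using 1
  ext x
  simp only [gdSet, badTSet, mem_setOf_eq, mem_inter_iff, mem_compl_iff,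
    Function.comp_apply, Matrix.cons_val_zero, Matrix.cons_val_one, Matrix.head_cons,
    Matrix.cons_val_two, Matrix.tail_cons, Matrix.cons_val_three, Matrix.cons_val_four,
    Sum.elim_inl, Sum.elim_inr, not_exists]
  constructor
  · rintro ⟨h1, h2⟩
    refine ⟨h1, fun w => ?_⟩
    have := h2 (w 0)
    tauto
  · rintro ⟨h1, h2⟩
    refine ⟨h1, fun t => ?_⟩
    have := h2 ![t]
    simpa using this

theorem hasODerivAt_iff_gd (f : M → M) (a l : M) :
    HasODerivAt f a l ↔ ∀ ε : M, ¬ (0 < ε ∧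
      ¬ ∃ δ : M, (0 < δ ∧ ∀ t : M, ¬ (t ≠ a ∧ |t - a| < δ ∧
        ¬ ∃ q : M, (t - a) * q = f t - f a ∧ |q - l| < ε))) := by
  constructor
  · intro h ε
    rintro ⟨hε, hno⟩
    obtain ⟨δ, hδ, hh⟩ := h ε hε
    refine hno ⟨δ, hδ, fun t => ?_⟩
    rintro ⟨ht, habs, hq⟩
    refine hq ⟨(f t - f a) / (t - a), ?_, hh t ht habs⟩
    field_simp [sub_ne_zero.mpr ht]
  · intro h ε hε
    have hP : ∃ δ : M, 0 < δ ∧ ∀ t : M, ¬ (t ≠ a ∧ |t - a| < δ ∧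
        ¬ ∃ q : M, (t - a) * q = f t - f a ∧ |q - l| < ε) := by
      by_contra hq
      exact h ε ⟨hε, hq⟩
    obtain ⟨δ, hδ, hh⟩ := hP
    refine ⟨δ, hδ, fun t ht habs => ?_⟩
    have h4 : ∃ q, (t - a) * q = f t - f a ∧ |q - l| < ε := by
      by_contra h5
      exact hh t ⟨ht, habs, h5⟩
    obtain ⟨q, hq1, hq2⟩ := h4
    have hqe : q = (f t - f a) / (t - a) :=
      eq_div_of_mul_eq (sub_ne_zero.mpr ht) (by rw [mul_comm]; exact hq1)
    rwa [← hqe]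

theorem defDG (hc : FieldCompat L M)
    (hf : A.Definable L {p : Fin 2 → M | f (p 0) = p 1}) :
    A.Definable L (dgSet f) := by
  have hLE := hc.1.mono (empty_subset A)
  have hADD := hc.2.1.mono (empty_subset A)
  have cP := defPlug (α := Fin 2 ⊕ Fin 1) (defPos1 hLE hADD) ![Sum.inr 0]
  have cG := (defExFin (defPlug (α := (Fin 2 ⊕ Fin 1) ⊕ Fin 1) (defGD hc hf)
    ![Sum.inl (Sum.inl 0), Sum.inl (Sum.inl 1), Sum.inl (Sum.inr 0), Sum.inr 0])).compl
  have h := (defExFin (cP.inter cG)).compl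
  convert h using 1
  ext x
  simp only [dgSet, gdSet, mem_setOf_eq, mem_inter_iff, mem_compl_iff,
    Function.comp_apply, Matrix.cons_val_zero, Matrix.cons_val_one, Matrix.head_cons,
    Matrix.cons_val_two, Matrix.tail_cons, Matrix.cons_val_three,
    Sum.elim_inl, Sum.elim_inr]
  rw [hasODerivAt_iff_gd f (x 0) (x 1)]
  constructor
  · rintro h ⟨w, hw0, hw1⟩
    refine h (w 0) ⟨hw0, fun ⟨δ, hδ, hh⟩ => hw1 ⟨![δ], hδ, hh⟩⟩
  · intro h ε
    rintro ⟨hε, hno⟩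
    refine h ⟨![ε], hε, fun ⟨w2, hw2a, hw2b⟩ => hno ⟨w2 0, hw2a, hw2b⟩⟩

theorem oderiv_unique {f : M → M} {a l1 l2 : M}
    (h1 : HasODerivAt f a l1) (h2 : HasODerivAt f a l2) : l1 = l2 := by
  by_contra hne
  have hε : 0 < |l1 - l2| / 2 := by
    have : l1 - l2 ≠ 0 := sub_ne_zero.mpr hne
    positivity
  obtain ⟨δ1, hδ1, hh1⟩ := h1 _ hε
  obtain ⟨δ2, hδ2, hh2⟩ := h2 _ hε
  set δ := min δ1 δ2 with hδdef
  have hδ : 0 < δ := lt_min hδ1 hδ2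
  set t := a + δ / 2 with ht
  have htne : t ≠ a := by
    simp only [ht]; intro hcon; nlinarith [hδ]
  have habs : |t - a| < δ := by
    rw [ht]; simp only [add_sub_cancel_left]
    rw [abs_of_pos (by positivity)]; linarith
  have e1 := hh1 t htne (lt_of_lt_of_le habs (min_le_left _ _))
  have e2 := hh2 t htne (lt_of_lt_of_le habs (min_le_right _ _))
  have hq := abs_sub_le l1 ((f t - f a) / (t - a)) l2
  rw [abs_sub_comm l1 ((f t - f a) / (t - a))] at hq
  linarith

theorem defDerivGraph {f' : M → M} (hc : FieldCompat L M)
    (hf : A.Definable L {p : Fin 2 → M | f (p 0) = p 1})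
    (hder : ∀ t : M, HasODerivAt f t (f' t)) :
    A.Definable L {p : Fin 2 → M | f' (p 0) = p 1} := by
  have h := defDG hc hf
  convert h using 1
  ext p
  simp only [dgSet, mem_setOf_eq]
  constructor
  · intro hp; rw [← hp]; exact hder _
  · intro hp; exact oderiv_unique (hder (p 0)) hp

end FunSets

section MoreSets

variable [Field M] [LinearOrder M] [IsStrictOrderedRing M]

theorem defGeC (hc : FieldCompat L M) {c : M} (hcA : c ∈ A) :
    A.Definable L {p : Fin 1 → M | c ≤ p 0} := by
  have hLE := hc.1.mono (empty_subset A)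
  have c1 := defPlug (α := Fin 1 ⊕ Fin 1) (defConst (L := L) hcA) ![Sum.inr 0]
  have c2 := defPlug (α := Fin 1 ⊕ Fin 1) hLE ![Sum.inr 0, Sum.inl 0]
  have h := defExFin (c1.inter c2)
  convert h using 1
  ext p
  simp only [mem_setOf_eq, mem_inter_iff, Function.comp_apply, Matrix.cons_val_zero,
    Matrix.cons_val_one, Matrix.head_cons, Sum.elim_inl, Sum.elim_inr]
  constructor
  · intro hp; exact ⟨![c], rfl, hp⟩
  · rintro ⟨w, h1, h2⟩; rw [← h1]; exact h2

theorem defLeC (hc : FieldCompat L M) {c : M} (hcA : c ∈ A) :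
    A.Definable L {p : Fin 1 → M | p 0 ≤ c} := by
  have hLE := hc.1.mono (empty_subset A)
  have c1 := defPlug (α := Fin 1 ⊕ Fin 1) (defConst (L := L) hcA) ![Sum.inr 0]
  have c2 := defPlug (α := Fin 1 ⊕ Fin 1) hLE ![Sum.inl 0, Sum.inr 0]
  have h := defExFin (c1.inter c2)
  convert h using 1
  ext p
  simp only [mem_setOf_eq, mem_inter_iff, Function.comp_apply, Matrix.cons_val_zero,
    Matrix.cons_val_one, Matrix.head_cons, Sum.elim_inl, Sum.elim_inr]
  constructor
  · intro hp; exact ⟨![c], rfl, hp⟩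
  · rintro ⟨w, h1, h2⟩; rw [← h1]; exact h2

/-- Definability of the "creeping" set for the growth lemma, increasing version. -/
theorem defGrowthS {f : M → M} (hc : FieldCompat L M)
    (hf : A.Definable L {p : Fin 2 → M | f (p 0) = p 1})
    {u v K' : M} (hu : u ∈ A) (hv : v ∈ A) (hK' : K' ∈ A) :
    A.Definable L {p : Fin 1 → M |
      u ≤ p 0 ∧ p 0 ≤ v ∧ ∀ r, u ≤ r → r ≤ p 0 → K' * (r - u) ≤ f r - f u} := by
  have hLE := hc.1.mono (empty_subset A)
  have hADD := hc.2.1.mono (empty_subset A)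
  have hMUL := hc.2.2.mono (empty_subset A)
  -- aux vars: 0:r, 1:d (=r-u), 2:m (=K'*d), 3:fr, 4:fu, 5:e (=fr-fu), 6:u, 7:K'
  have c1 := defPlug (α := Fin 1 ⊕ Fin 8) (defConst (L := L) hu) ![Sum.inr 6]
  have c2 := defPlug (α := Fin 1 ⊕ Fin 8) (defConst (L := L) hK') ![Sum.inr 7]
  have c3 := defPlug (α := Fin 1 ⊕ Fin 8) hLE ![Sum.inr 6, Sum.inr 0]
  have c4 := defPlug (α := Fin 1 ⊕ Fin 8) hLE ![Sum.inr 0, Sum.inl 0]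
  have c5 := defPlug (α := Fin 1 ⊕ Fin 8) hADD ![Sum.inr 1, Sum.inr 6, Sum.inr 0]
  have c6 := defPlug (α := Fin 1 ⊕ Fin 8) hMUL ![Sum.inr 7, Sum.inr 1, Sum.inr 2]
  have c7 := defPlug (α := Fin 1 ⊕ Fin 8) hf ![Sum.inr 0, Sum.inr 3]
  have c8 := defPlug (α := Fin 1 ⊕ Fin 8) hf ![Sum.inr 6, Sum.inr 4]
  have c9 := defPlug (α := Fin 1 ⊕ Fin 8) hADD ![Sum.inr 5, Sum.inr 4, Sum.inr 3]
  have c10 := (defPlug (α := Fin 1 ⊕ Fin 8) hLE ![Sum.inr 2, Sum.inr 5]).compl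
  have hEx := (defExFin (c1.inter (c2.inter (c3.inter (c4.inter (c5.inter (c6.inter
    (c7.inter (c8.inter (c9.inter c10)))))))))).compl
  have h := (defGeC hc hu).inter ((defLeC hc hv).inter hEx)
  convert h using 1
  ext p
  simp only [mem_setOf_eq, mem_inter_iff, mem_compl_iff, Function.comp_apply,
    Matrix.cons_val_zero, Matrix.cons_val_one, Matrix.head_cons, Matrix.cons_val_two,
    Matrix.tail_cons, Sum.elim_inl, Sum.elim_inr, not_exists]
  refine and_congr_right fun h1 => and_congr_right fun h2 => ?_
  constructor
  · intro hq w
    rintro ⟨e1, e2, e3, e4, e5, e6, e7, e8, e9, e10⟩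
    refine e10 ?_
    have hd : w 1 = w 0 - u := by rw [← e1]; linarith
    have he : w 5 = w 3 - w 4 := by linarith
    have hm : w 2 = K' * (w 0 - u) := by rw [← e6, ← e2, hd]
    rw [hm, he, ← e7, ← e8, e1]
    exact hq (w 0) (by rw [← e1]; exact e3) e4
  · intro hq r hur hrp
    by_contra hno
    refine hq ![r, r - u, K' * (r - u), f r, f u, f r - f u, u, K']
      ⟨rfl, rfl, ?_, ?_, ?_, ?_, ?_, ?_, ?_, ?_⟩
    · show u ≤ r; exact hur
    · show r ≤ p 0; exact hrp
    · show r - u + u = r; ring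
    · show K' * (r - u) = K' * (r - u); rfl
    · show f r = f r; rfl
    · show f u = f u; rfl
    · show f r - f u + f u = f r; ring
    · show ¬ (K' * (r - u) ≤ f r - f u); exact hno

/-- Definability of the "creeping" set for the growth lemma, decreasing version. -/
theorem defGrowthSNeg {f : M → M} (hc : FieldCompat L M)
    (hf : A.Definable L {p : Fin 2 → M | f (p 0) = p 1})
    {u v K' : M} (hu : u ∈ A) (hv : v ∈ A) (hK' : K' ∈ A) :
    A.Definable L {p : Fin 1 → M |
      u ≤ p 0 ∧ p 0 ≤ v ∧ ∀ r, u ≤ r → r ≤ p 0 → K' * (r - u) ≤ f u - f r} := by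
  have hLE := hc.1.mono (empty_subset A)
  have hADD := hc.2.1.mono (empty_subset A)
  have hMUL := hc.2.2.mono (empty_subset A)
  -- aux vars: 0:r, 1:d (=r-u), 2:m (=K'*d), 3:fr, 4:fu, 5:e (=fu-fr), 6:u, 7:K'
  have c1 := defPlug (α := Fin 1 ⊕ Fin 8) (defConst (L := L) hu) ![Sum.inr 6]
  have c2 := defPlug (α := Fin 1 ⊕ Fin 8) (defConst (L := L) hK') ![Sum.inr 7]
  have c3 := defPlug (α := Fin 1 ⊕ Fin 8) hLE ![Sum.inr 6, Sum.inr 0]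
  have c4 := defPlug (α := Fin 1 ⊕ Fin 8) hLE ![Sum.inr 0, Sum.inl 0]
  have c5 := defPlug (α := Fin 1 ⊕ Fin 8) hADD ![Sum.inr 1, Sum.inr 6, Sum.inr 0]
  have c6 := defPlug (α := Fin 1 ⊕ Fin 8) hMUL ![Sum.inr 7, Sum.inr 1, Sum.inr 2]
  have c7 := defPlug (α := Fin 1 ⊕ Fin 8) hf ![Sum.inr 0, Sum.inr 3]
  have c8 := defPlug (α := Fin 1 ⊕ Fin 8) hf ![Sum.inr 6, Sum.inr 4]
  have c9 := defPlug (α := Fin 1 ⊕ Fin 8) hADD ![Sum.inr 5, Sum.inr 3, Sum.inr 4]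
  have c10 := (defPlug (α := Fin 1 ⊕ Fin 8) hLE ![Sum.inr 2, Sum.inr 5]).compl
  have hEx := (defExFin (c1.inter (c2.inter (c3.inter (c4.inter (c5.inter (c6.inter
    (c7.inter (c8.inter (c9.inter c10)))))))))).compl
  have h := (defGeC hc hu).inter ((defLeC hc hv).inter hEx)
  convert h using 1
  ext p
  simp only [mem_setOf_eq, mem_inter_iff, mem_compl_iff, Function.comp_apply,
    Matrix.cons_val_zero, Matrix.cons_val_one, Matrix.head_cons, Matrix.cons_val_two,
    Matrix.tail_cons, Sum.elim_inl, Sum.elim_inr, not_exists]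
  refine and_congr_right fun h1 => and_congr_right fun h2 => ?_
  constructor
  · intro hq w
    rintro ⟨e1, e2, e3, e4, e5, e6, e7, e8, e9, e10⟩
    refine e10 ?_
    have hd : w 1 = w 0 - u := by rw [← e1]; linarith
    have he : w 5 = w 4 - w 3 := by linarith
    have hm : w 2 = K' * (w 0 - u) := by rw [← e6, ← e2, hd]
    rw [hm, he, ← e7, ← e8, e1]
    exact hq (w 0) (by rw [← e1]; exact e3) e4
  · intro hq r hur hrp
    by_contra hno
    refine hq ![r, r - u, K' * (r - u), f r, f u, f u - f r, u, K']
      ⟨rfl, rfl, ?_, ?_, ?_, ?_, ?_, ?_, ?_, ?_⟩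
    · show u ≤ r; exact hur
    · show r ≤ p 0; exact hrp
    · show r - u + u = r; ring
    · show K' * (r - u) = K' * (r - u); rfl
    · show f r = f r; rfl
    · show f u = f u; rfl
    · show f u - f r + f r = f u; ring
    · show ¬ (K' * (r - u) ≤ f u - f r); exact hno

end MoreSets

section Analysis

variable [Field M] [LinearOrder M] [IsStrictOrderedRing M]

theorem fui_lub {X : Set M} (h : FinUnionIntervals X) (hne : X.Nonempty) (hbd : BddAbove X) :
    ∃ w, IsLUB X w := by
  classical
  obtain ⟨t, hshape, rfl⟩ := h
  induction t using Finset.induction_on with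
  | empty => simp only [Finset.coe_empty, sUnion_empty] at hne; exact absurd hne (not_nonempty_empty)
  | @insert a s ha IH =>
    rw [Finset.coe_insert, sUnion_insert] at hne hbd ⊢
    rcases a.eq_empty_or_nonempty with hae | hane
    · rw [hae, empty_union] at hne hbd ⊢
      exact IH (fun u hu => hshape u (Finset.mem_insert_of_mem hu)) hne hbd
    · have hbda : BddAbove a := hbd.mono subset_union_left
      have hlub_a : ∃ wa, IsLUB a wa := by
        rcases hshape a (Finset.mem_insert_self a s) with ⟨c, d, rfl⟩ | ⟨c, rfl⟩ | ⟨c, rfl⟩ |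
          ⟨c, rfl⟩ | rfl
        · exact ⟨d, isLUB_Ioo (Set.nonempty_Ioo.mp hane)⟩
        · exact absurd hbda (not_bddAbove_Ioi c)
        · exact ⟨c, isLUB_Iio⟩
        · exact ⟨c, isLUB_singleton⟩
        · exact absurd hbda not_bddAbove_univ
      obtain ⟨wa, hwa⟩ := hlub_a
      rcases (⋃₀ ↑s : Set M).eq_empty_or_nonempty with hse | hsne
      · rw [hse, union_empty]
        exact ⟨wa, hwa⟩
      · obtain ⟨wb, hwb⟩ := IH (fun u hu => hshape u (Finset.mem_insert_of_mem hu)) hsne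
          (hbd.mono subset_union_right)
        exact ⟨wa ⊔ wb, hwa.union hwb⟩

set_option maxHeartbeats 1000000 in
/-- The growth (mean value) lemma via definable completeness. -/
theorem growth {g g' : M → M} (hd : ∀ s : M, HasODerivAt g s (g' s)) {u v K K' : M}
    (huv : u < v) (hK'K : K' < K) (hK : ∀ s, u ≤ s → s ≤ v → K ≤ g' s)
    (hlub : ∀ X : Set M, (Set.univ : Set M).Definable L {p : Fin 1 → M | p 0 ∈ X} →
      X.Nonempty → BddAbove X → ∃ w, IsLUB X w)
    (hSdef : (Set.univ : Set M).Definable L {p : Fin 1 → M | p 0 ∈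
      {s : M | u ≤ s ∧ s ≤ v ∧ ∀ r, u ≤ r → r ≤ s → K' * (r - u) ≤ g r - g u}}) :
    K' * (v - u) ≤ g v - g u := by
  set S := {s : M | u ≤ s ∧ s ≤ v ∧ ∀ r, u ≤ r → r ≤ s → K' * (r - u) ≤ g r - g u} with hSdefn
  have huS : u ∈ S := ⟨le_refl u, le_of_lt huv, fun r h1 h2 => by
    have : r = u := le_antisymm h2 h1
    rw [this]; simp⟩
  have hbd : BddAbove S := ⟨v, fun s hs => hs.2.1⟩
  obtain ⟨w, hw⟩ := hlub S hSdef ⟨u, huS⟩ hbd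
  have huw : u ≤ w := hw.1 huS
  have hwv : w ≤ v := hw.2 fun s hs => hs.2.1
  have hQlt : ∀ r, u ≤ r → r < w → K' * (r - u) ≤ g r - g u := by
    intro r h1 h2
    obtain ⟨s, hsS, hrs⟩ : ∃ s ∈ S, r < s := by
      by_contra hcon
      push_neg at hcon
      exact absurd (hw.2 fun s hs => hcon s hs) (not_le.mpr h2)
    exact hsS.2.2 r h1 (le_of_lt hrs)
  have hQw : K' * (w - u) ≤ g w - g u := by
    rcases eq_or_lt_of_le huw with he | hlt
    · rw [← he]; simp
    by_contra hq
    push_neg at hq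
    set γ := K' * (w - u) - (g w - g u) with hγdef
    have hγ : 0 < γ := by linarith
    obtain ⟨δ1, hδ1, hh1⟩ := hd w 1 one_pos
    set C := |g' w| + 1 + |K'| with hCdef
    have hC : 0 < C := by positivity
    set η := min (min δ1 (γ / (C + 1))) (w - u) with hηdef
    have hη0 : 0 < η := lt_min (lt_min hδ1 (by positivity)) (by linarith)
    set r := w - η / 2 with hrdef
    have hrw : r < w := by rw [hrdef]; linarith
    have hur : u ≤ r := by
      have h5 : η ≤ w - u := min_le_right _ _
      rw [hrdef]; linarith
    have hrne : r ≠ w := ne_of_lt hrw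
    have hwr : w - r = η / 2 := by rw [hrdef]; ring
    have habs : |r - w| < δ1 := by
      have h6 : |r - w| = η / 2 := by
        rw [show r - w = -(η/2) by rw [hrdef]; ring, abs_neg, abs_of_pos (by positivity)]
      have h7 : η ≤ δ1 := le_trans (min_le_left _ _) (min_le_left _ _)
      rw [h6]; linarith
    have hquot := hh1 r hrne habs
    have hwr0 : r - w ≠ 0 := sub_ne_zero.mpr hrne
    have hkey : |g r - g w| ≤ (|g' w| + 1) * (w - r) := by
      have hq1 : |(g r - g w) / (r - w)| ≤ |g' w| + 1 := by
        have h8 := abs_add_le ((g r - g w) / (r - w) - g' w) (g' w)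
        have h9 : (g r - g w) / (r - w) - g' w + g' w = (g r - g w) / (r - w) := by ring
        rw [h9] at h8
        linarith
      have hq2 : |g r - g w| = |(g r - g w) / (r - w)| * |r - w| := by
        rw [← abs_mul, div_mul_cancel₀ _ hwr0]
      have hq3 : |r - w| = w - r := by
        rw [abs_of_neg (by linarith : r - w < 0)]; ring
      rw [hq2, hq3]
      have hwrpos : 0 ≤ w - r := by linarith
      exact mul_le_mul_of_nonneg_right hq1 hwrpos |>.trans_eq rfl
    have hQr := hQlt r hur hrw
    have hlow := (abs_le.mp hkey).2
    have hK'b : K' * (w - r) ≤ |K'| * (w - r) := by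
      have h10 : K' ≤ |K'| := le_abs_self _
      have h11 : 0 ≤ w - r := by linarith
      exact mul_le_mul_of_nonneg_right h10 h11
    have hsmall : C * (w - r) < γ := by
      rw [hwr]
      have hηle : η ≤ γ / (C + 1) := le_trans (min_le_left _ _) (min_le_right _ _)
      have h12 : C * (η / 2) ≤ C * η := by nlinarith
      have h13 : C * η < (C + 1) * (γ / (C + 1)) := by
        have : C * η ≤ C * (γ / (C+1)) := by
          apply mul_le_mul_of_nonneg_left hηle (le_of_lt hC)
        have h14 : C * (γ / (C+1)) < (C + 1) * (γ / (C + 1)) := by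
          have : 0 < γ / (C + 1) := by positivity
          nlinarith
        linarith
      have h15 : (C + 1) * (γ / (C + 1)) = γ := by field_simp
      linarith
    -- combine : g w - g u ≥ K'(r-u) - (|g'w|+1)(w-r) ≥ K'(w-u) - C(w-r) > K'(w-u) - γ
    have hfinal : K' * (w - u) - γ < g w - g u := by
      have e1 : K' * (r - u) = K' * (w - u) - K' * (w - r) := by ring
      have e2 : g w - g u = (g r - g u) - (g r - g w) := by ring
      have e3 : C * (w - r) = (|g' w| + 1) * (w - r) + |K'| * (w - r) := by
        rw [hCdef]; ring
      linarith [hQr, hlow, hK'b, hsmall]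
    rw [hγdef] at hfinal
    linarith
  have hwS : w ∈ S := ⟨huw, hwv, fun r h1 h2 => by
    rcases lt_or_eq_of_le h2 with h | h
    · exact hQlt r h1 h
    · rw [h]; exact hQw⟩
  rcases eq_or_lt_of_le hwv with he | hlt
  · rw [← he]; exact hQw
  · exfalso
    obtain ⟨δ2, hδ2, hh2⟩ := hd w (K - K') (by linarith)
    set s := w + min δ2 (v - w) / 2 with hsdef
    have hmin0 : 0 < min δ2 (v - w) := lt_min hδ2 (by linarith)
    have hsw : w < s := by rw [hsdef]; linarith
    have hsv : s ≤ v := by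
      have h16 : min δ2 (v - w) ≤ v - w := min_le_right _ _
      rw [hsdef]; linarith
    have hsS : s ∈ S := by
      refine ⟨le_trans huw (le_of_lt hsw), hsv, fun r h1 h2 => ?_⟩
      rcases le_or_gt r w with h | h
      · exact hwS.2.2 r h1 h
      · have hrne : r ≠ w := ne_of_gt h
        have habs : |r - w| < δ2 := by
          rw [abs_of_pos (by linarith : (0:M) < r - w)]
          have h17 : min δ2 (v - w) ≤ δ2 := min_le_left _ _
          rw [hsdef] at h2
          linarith
        have hquot := hh2 r hrne habs
        have h3 : K' < (g r - g w) / (r - w) := by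
          have h18 := (abs_lt.mp hquot).1
          have hKw := hK w huw (le_of_lt hlt)
          linarith
        have h4 : K' * (r - w) ≤ g r - g w := by
          have hpos : 0 < r - w := by linarith
          have := (lt_div_iff₀ hpos).mp h3
          linarith
        have h5 := hwS.2.2 w huw (le_refl w)
        have e4 : K' * (r - u) = K' * (r - w) + K' * (w - u) := by ring
        linarith
    exact absurd (hw.1 hsS) (not_le.mpr hsw)

theorem hasODerivAt_neg {f : M → M} {a l : M} (h : HasODerivAt f a l) :
    HasODerivAt (fun t => -(f t)) a (-l) := by
  intro ε hε
  obtain ⟨δ, hδ, hh⟩ := h ε hε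
  refine ⟨δ, hδ, fun t ht habs => ?_⟩
  have := hh t ht habs
  have e : (-(f t) - -(f a)) / (t - a) - -l = -((f t - f a) / (t - a) - l) := by ring
  rw [e, abs_neg]
  exact this

end Analysis

section Boundary

variable [Field M] [LinearOrder M] [IsStrictOrderedRing M]

/-- Order-topological boundary points. -/
def bdry (X : Set M) : Set M :=
  {w : M | ∀ δ : M, 0 < δ → (∃ y, |y - w| < δ ∧ y ∈ X) ∧ (∃ z, |z - w| < δ ∧ z ∉ X)}

theorem unif_delta {w : M} (t : Finset (Set M))
    (h : ∀ u ∈ t, ∃ δ : M, 0 < δ ∧ ∀ z, |z - w| < δ → z ∉ u) :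
    ∃ δ : M, 0 < δ ∧ ∀ u ∈ t, ∀ z, |z - w| < δ → z ∉ u := by
  classical
  induction t using Finset.induction_on with
  | empty => exact ⟨1, one_pos, by simp⟩
  | @insert a s ha IH =>
    obtain ⟨δ1, h1, hh1⟩ := h a (Finset.mem_insert_self a s)
    obtain ⟨δ2, h2, hh2⟩ := IH (fun u hu => h u (Finset.mem_insert_of_mem hu))
    refine ⟨min δ1 δ2, lt_min h1 h2, fun u hu z hz => ?_⟩
    rcases Finset.mem_insert.mp hu with rfl | hu
    · exact hh1 z (lt_of_lt_of_le hz (min_le_left _ _))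
    · exact hh2 u hu z (lt_of_lt_of_le hz (min_le_right _ _))

theorem bdry_finite {X : Set M} (h : FinUnionIntervals X) : (bdry X).Finite := by
  classical
  obtain ⟨t, hshape, rfl⟩ := h
  have hex : ∀ u : Set M, ∃ F : Set M, F.Finite ∧ (u ∈ t →
      ∀ w, w ∉ F → (w ∈ u → ∃ δ : M, 0 < δ ∧ ∀ z, |z - w| < δ → z ∈ u) ∧
        (w ∉ u → ∃ δ : M, 0 < δ ∧ ∀ z, |z - w| < δ → z ∉ u)) := by
    intro u
    by_cases hu : u ∈ t
    case neg => exact ⟨∅, finite_empty, fun h => absurd h hu⟩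
    rcases hshape u hu with ⟨a, b, rfl⟩ | ⟨a, rfl⟩ | ⟨a, rfl⟩ | ⟨a, rfl⟩ | rfl
    · refine ⟨{a, b}, (finite_singleton b).insert a, fun _ w hw => ⟨?_, ?_⟩⟩
      · intro hwu
        rw [mem_Ioo] at hwu
        refine ⟨min (w - a) (b - w), lt_min (by linarith [hwu.1]) (by linarith [hwu.2]),
          fun z hz => ?_⟩
        have hz1 := lt_of_lt_of_le hz (min_le_left _ _)
        have hz2 := lt_of_lt_of_le hz (min_le_right _ _)
        rw [mem_Ioo]
        constructor
        · linarith [(abs_lt.mp hz1).1]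
        · linarith [(abs_lt.mp hz2).2]
      · intro hwu
        have hwa : w ≠ a := fun hc => hw (by rw [hc]; exact mem_insert _ _)
        have hwb : w ≠ b := fun hc => hw (by rw [hc]; exact mem_insert_of_mem _ rfl)
        rw [mem_Ioo, not_and_or] at hwu
        rcases hwu with h | h
        · push_neg at h
          have hlt : w < a := lt_of_le_of_ne h hwa
          refine ⟨a - w, by linarith, fun z hz hzin => ?_⟩
          rw [mem_Ioo] at hzin
          linarith [(abs_lt.mp hz).2, hzin.1]
        · push_neg at h
          have hlt : b < w := lt_of_le_of_ne h (Ne.symm hwb)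
          refine ⟨w - b, by linarith, fun z hz hzin => ?_⟩
          rw [mem_Ioo] at hzin
          linarith [(abs_lt.mp hz).1, hzin.2]
    · refine ⟨{a}, finite_singleton a, fun _ w hw => ⟨?_, ?_⟩⟩
      · intro hwu
        rw [mem_Ioi] at hwu
        refine ⟨w - a, by linarith, fun z hz => ?_⟩
        rw [mem_Ioi]
        linarith [(abs_lt.mp hz).1]
      · intro hwu
        rw [mem_Ioi, not_lt] at hwu
        have hwa : w ≠ a := fun hc => hw (by rw [hc]; exact rfl)
        have hlt : w < a := lt_of_le_of_ne hwu hwa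
        refine ⟨a - w, by linarith, fun z hz hzin => ?_⟩
        rw [mem_Ioi] at hzin
        linarith [(abs_lt.mp hz).2]
    · refine ⟨{a}, finite_singleton a, fun _ w hw => ⟨?_, ?_⟩⟩
      · intro hwu
        rw [mem_Iio] at hwu
        refine ⟨a - w, by linarith, fun z hz => ?_⟩
        rw [mem_Iio]
        linarith [(abs_lt.mp hz).2]
      · intro hwu
        rw [mem_Iio, not_lt] at hwu
        have hwa : w ≠ a := fun hc => hw (by rw [hc]; exact rfl)
        have hlt : a < w := lt_of_le_of_ne hwu (Ne.symm hwa)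
        refine ⟨w - a, by linarith, fun z hz hzin => ?_⟩
        rw [mem_Iio] at hzin
        linarith [(abs_lt.mp hz).1]
    · refine ⟨{a}, finite_singleton a, fun _ w hw => ⟨?_, ?_⟩⟩
      · intro hwu
        exact absurd hwu hw
      · intro hwu
        have hwa : w ≠ a := fun hc => hwu (by rw [hc]; exact rfl)
        refine ⟨|w - a|, abs_pos.mpr (sub_ne_zero.mpr hwa), fun z hz hzin => ?_⟩
        rw [mem_singleton_iff] at hzin
        subst hzin
        rw [abs_sub_comm z w] at hz
        exact absurd hz (lt_irrefl _)
    · exact ⟨∅, finite_empty, fun _ w _ =>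
        ⟨fun _ => ⟨1, one_pos, fun z _ => mem_univ z⟩, fun hwu => absurd (mem_univ w) hwu⟩⟩
  choose F hFfin hFprop using hex
  have hPfin : (⋃ u ∈ t, F u).Finite := t.finite_toSet.biUnion fun u _ => hFfin u
  refine hPfin.subset fun w hwB => ?_
  by_contra hwP
  rw [mem_iUnion₂] at hwP
  push_neg at hwP
  by_cases hw : w ∈ ⋃₀ (↑t : Set (Set M))
  · obtain ⟨u0, hu0, hwu0⟩ := hw
    have hu0' : u0 ∈ t := hu0
    obtain ⟨δ, hδ, hball⟩ := (hFprop u0 hu0' w (hwP u0 hu0')).1 hwu0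
    obtain ⟨z, hz1, hz2⟩ := (hwB δ hδ).2
    exact hz2 ⟨u0, hu0', hball z hz1⟩
  · have huni : ∀ u ∈ t, ∃ δ : M, 0 < δ ∧ ∀ z, |z - w| < δ → z ∉ u := fun u hu =>
      (hFprop u hu w (hwP u hu)).2 fun hwu => hw ⟨u, hu, hwu⟩
    obtain ⟨δ, hδ, hh⟩ := unif_delta t huni
    obtain ⟨y, hy1, hy2⟩ := (hwB δ hδ).1
    obtain ⟨u0, hu0, hyu0⟩ := hy2
    exact hh u0 hu0 y hy1 hyu0

theorem defBdry (hc : FieldCompat L M) {X : Set M}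
    (hX : A.Definable L {p : Fin 1 → M | p 0 ∈ X}) :
    A.Definable L {p : Fin 1 → M | p 0 ∈ bdry X} := by
  have hLE := hc.1.mono (empty_subset A)
  have hADD := hc.2.1.mono (empty_subset A)
  have n1 := defPlug (α := Fin 2 ⊕ Fin 2) hADD ![Sum.inr 1, Sum.inl 0, Sum.inr 0]
  have n2 := defPlug (α := Fin 2 ⊕ Fin 2) (defAbsLT hLE hADD) ![Sum.inr 1, Sum.inl 1]
  have n3 := defPlug (α := Fin 2 ⊕ Fin 2) hX ![Sum.inr 0]
  have n3c := defPlug (α := Fin 2 ⊕ Fin 2) hX.compl ![Sum.inr 0]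
  have hNI := defExFin (n1.inter (n2.inter n3))
  have hNO := defExFin (n1.inter (n2.inter n3c))
  have b1 := defPlug (α := Fin 1 ⊕ Fin 1) (defPos1 hLE hADD) ![Sum.inr 0]
  have b2 := defPlug (α := Fin 1 ⊕ Fin 1) hNI ![Sum.inl 0, Sum.inr 0]
  have b3 := defPlug (α := Fin 1 ⊕ Fin 1) hNO ![Sum.inl 0, Sum.inr 0]
  have h := (defExFin (b1.inter (b2.inter b3).compl)).compl
  convert h using 1
  ext x
  simp only [bdry, mem_setOf_eq, mem_inter_iff, mem_compl_iff, Function.comp_apply,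
    Matrix.cons_val_zero, Matrix.cons_val_one, Matrix.head_cons, Matrix.cons_val_two,
    Matrix.tail_cons, Sum.elim_inl, Sum.elim_inr]
  constructor
  · rintro hb ⟨w, hw0, hw1⟩
    obtain ⟨⟨y, hy1, hy2⟩, ⟨z, hz1, hz2⟩⟩ := hb (w 0) hw0
    refine hw1 ⟨⟨![y, y - x 0], by show y - x 0 + x 0 = y; ring,
        by show |y - x 0| < w 0; exact hy1, hy2⟩,
      ⟨![z, z - x 0], by show z - x 0 + x 0 = z; ring,
        by show |z - x 0| < w 0; exact hz1, hz2⟩⟩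
  · intro h δ hδ
    by_contra hno
    rw [not_and_or] at hno
    refine h ⟨![δ], hδ, fun ⟨⟨wy, e1, e2, e3⟩, ⟨wz, f1, f2, f3⟩⟩ => ?_⟩
    rcases hno with hno | hno
    · refine hno ⟨wy 0, ?_, e3⟩
      have : wy 1 = wy 0 - x 0 := by linarith
      rw [← this]; exact e2
    · refine hno ⟨wz 0, ?_, f3⟩
      have : wz 1 = wz 0 - x 0 := by linarith
      rw [← this]; exact f2

theorem finite_def_subset (hc : FieldCompat L M) (hdc : DclClosed L A) :
    ∀ n : ℕ, ∀ s : Set M, s.Finite →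
      A.Definable L {p : Fin 1 → M | p 0 ∈ s} → s.ncard = n → s ⊆ A := by
  have hLE := hc.1.mono (empty_subset A)
  intro n
  induction n using Nat.strong_induction_on with
  | _ n IH =>
    intro s hfin hdef hcard
    rcases s.eq_empty_or_nonempty with rfl | hne
    · exact empty_subset A
    obtain ⟨m0, hm0, hmin⟩ := Set.exists_min_image s id hfin hne
    have cIn := defPlug (α := Fin 1 ⊕ Fin 1) hdef ![Sum.inr 0]
    have cLT := defPlug (α := Fin 1 ⊕ Fin 1) (defLT hLE) ![Sum.inr 0, Sum.inl 0]
    have hMinDef : A.Definable L {p : Fin 1 → M | p 0 ∈ ({m0} : Set M)} := by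
      have h := hdef.inter (defExFin (cIn.inter cLT)).compl
      convert h using 1
      ext p
      simp only [mem_setOf_eq, mem_inter_iff, mem_compl_iff, mem_singleton_iff,
        Function.comp_apply, Matrix.cons_val_zero, Matrix.cons_val_one, Matrix.head_cons,
        Sum.elim_inl, Sum.elim_inr, not_exists]
      constructor
      · rintro rfl
        exact ⟨hm0, fun w hw => absurd hw.2 (not_lt.mpr (hmin (w 0) hw.1))⟩
      · rintro ⟨hp, hmin'⟩
        have h1 : ¬ (m0 ∈ s ∧ m0 < p 0) := by
          have := hmin' ![m0]
          simpa using this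
        have h2 : ¬ m0 < p 0 := fun hc2 => h1 ⟨hm0, hc2⟩
        exact le_antisymm (not_lt.mp h2) (hmin (p 0) hp)
    have hm0A : m0 ∈ A := by
      apply hdc
      unfold InDcl DefSet
      exact hMinDef
    rcases Nat.eq_zero_or_pos n with rfl | hpos
    · rw [Set.ncard_eq_zero hfin] at hcard
      subst hcard
      exact absurd hne (by simp)
    have hrest : (s \ {m0}) ⊆ A := by
      have hdef' : A.Definable L {p : Fin 1 → M | p 0 ∈ s \ {m0}} := by
        have h := hdef.inter (defConst (L := L) hm0A).compl
        convert h using 1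
        ext p; simp
      have hlt : (s \ {m0}).ncard < n := by
        rw [← hcard]
        exact Set.ncard_diff_singleton_lt_of_mem hm0 hfin
      exact IH _ hlt _ (hfin.subset diff_subset) hdef' rfl
    intro x hx
    rcases eq_or_ne x m0 with rfl | hxm
    · exact hm0A
    · exact hrest ⟨hx, hxm⟩

end Boundary

section InvHelpers

variable [Field M] [LinearOrder M] [IsStrictOrderedRing M]

theorem inv_le_swap {x c : M} (hc : 0 < c) (hx : 0 < x) (h : c ≤ x⁻¹) : x ≤ c⁻¹ := by
  have h1 : c * x ≤ 1 := by
    have h2 := mul_le_mul_of_nonneg_right h hx.le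
    rwa [inv_mul_cancel₀ hx.ne'] at h2
  by_contra hcon
  push_neg at hcon
  have h2 : c * c⁻¹ < c * x := mul_lt_mul_of_pos_left hcon hc
  rw [mul_inv_cancel₀ hc.ne'] at h2
  linarith

theorem inv_lt_swap {x c : M} (hc : 0 < c) (hx : 0 < x) (h : c < x⁻¹) : x < c⁻¹ := by
  have h1 : c * x < 1 := by
    have h2 := mul_lt_mul_of_pos_right h hx
    rwa [inv_mul_cancel₀ hx.ne'] at h2
  by_contra hcon
  push_neg at hcon
  have h2 : c * c⁻¹ ≤ c * x := mul_le_mul_of_nonneg_left hcon hc.le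
  rw [mul_inv_cancel₀ hc.ne'] at h2
  linarith

end InvHelpers

end Stmt9Aux

open Set FirstOrder.Language

/-- Let `(E, O) ⊨ T_convex`, `b` realizing the special cut
`O < b < E^{>O}`, and `f` an `E`-definable differentiable function (with derivative
`f'`).  If `f b` lies in the maximal ideal `m_b` of `O_b = {y ∈ E⟨b⟩ : |y| < E^{>O}}`
then `f' b ∈ m_b`; if `f b` lies in the maximal ideal of the convex hull `O_b⁻` of `O`
in `E⟨b⟩`, then so does `f' b`. -/
theorem stmt9 {L : FirstOrder.Language} {U : Type*} [L.Structure U]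
    [Field U] [LinearOrder U] [IsStrictOrderedRing U] [TopologicalSpace U] [OrderTopology U]
    (hOmin : IsOMin L U) (hcompat : FieldCompat L U)
    (E : Subfield U) (hEd : DclClosed L (E : Set U))
    (O : Subring U) (hOE : (O : Set U) ⊆ (E : Set U))
    (hconv : ∀ a b : U, a ∈ O → b ∈ E → |b| ≤ |a| → b ∈ O)
    (hTc : ∀ f : U → U, DefFun L (∅ : Set U) f → Continuous f → ∀ t ∈ O, f t ∈ O)
    (hnt : ∃ e ∈ E, e ∉ O)
    (b : U) (hb1 : ∀ o ∈ O, o < b) (hb2 : ∀ e ∈ E, (∀ o ∈ O, o < (e : U)) → b < e)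
    (f f' : U → U) (hf : DefFun L (E : Set U) f)
    (hder : ∀ t : U, HasODerivAt f t (f' t)) :
    (f b ∈ mIdealOf (Oball L (E : Set U) (O : Set U) b) →
      f' b ∈ mIdealOf (Oball L (E : Set U) (O : Set U) b)) ∧
    (f b ∈ mIdealOf (OballMinus L (E : Set U) (O : Set U) b) →
      f' b ∈ mIdealOf (OballMinus L (E : Set U) (O : Set U) b)) := by
  classical
  -- basic arithmetic facts about the cut
  have hb0 : (0:U) < b := hb1 0 O.zero_mem
  have h1O : (1:U) ∈ O := O.one_mem
  have h2O : (2:U) ∈ O := by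
    rw [show (2:U) = 1 + 1 by norm_num]
    exact O.add_mem O.one_mem O.one_mem
  have h4O : (4:U) ∈ O := by
    have h := O.add_mem h2O h2O
    rw [show (2:U) + 2 = 4 by norm_num] at h
    exact h
  have hgap_one : ∀ e : U, e ∈ E → (∀ o ∈ O, o < e) → 1 < e := fun e heE hgap => hgap 1 h1O
  have h2b_lt : ∀ e : U, e ∈ E → (∀ o ∈ O, o < e) → 2*b < e := by
    intro e heE hgap
    have h2E : (2:U) ∈ E := hOE h2O
    have he2E : e/2 ∈ E := E.div_mem heE h2E
    have hgap2 : ∀ o ∈ O, o < e/2 := by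
      intro o ho
      have := hgap (2*o) (O.mul_mem h2O ho)
      linarith
    have := hb2 (e/2) he2E hgap2
    linarith
  have hgap_from_pos : ∀ e : U, e ∈ E → 0 < e → e ∉ O → (∀ o ∈ O, o < e) := by
    intro e heE he0 heO o ho
    by_contra hcon
    push_neg at hcon
    refine heO (hconv o e ho heE ?_)
    rw [abs_of_pos he0]
    calc e ≤ o := hcon
      _ ≤ |o| := le_abs_self o
  have hbase : ∃ e : U, e ∈ E ∧ (∀ o ∈ O, o < e) := by
    obtain ⟨e, heE, heO⟩ := hnt
    have he0 : e ≠ 0 := fun hc => heO (hc ▸ O.zero_mem)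
    have haE : |e| ∈ E := by
      rcases abs_cases e with ⟨h, _⟩ | ⟨h, _⟩
      · rw [h]; exact heE
      · rw [h]; exact E.neg_mem heE
    have haO : |e| ∉ O := by
      intro hc
      rcases abs_cases e with ⟨h, _⟩ | ⟨h, _⟩
      · exact heO (h ▸ hc)
      · exact heO (by have := O.neg_mem hc; rwa [h, neg_neg] at this)
    exact ⟨|e|, haE, hgap_from_pos _ haE (abs_pos.mpr he0) haO⟩
  -- definable completeness
  have hLEuniv := hcompat.1.mono (empty_subset (univ : Set U))
  have hlub : ∀ X : Set U, (univ : Set U).Definable L {p : Fin 1 → U | p 0 ∈ X} →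
      X.Nonempty → BddAbove X → ∃ w, IsLUB X w := fun X hd hn hb' =>
    fui_lub (hOmin X hd) hn hb'
  -- the gap-interval lemma : E-definable sets containing b contain [b, 2b]
  have gapI : ∀ X : Set U, (E : Set U).Definable L {p : Fin 1 → U | p 0 ∈ X} → b ∈ X →
      ∀ t, b ≤ t → t ≤ 2*b → t ∈ X := by
    intro X hXdef hbX t0 hbt0 ht02b
    by_contra ht0X
    have hXuniv : (univ : Set U).Definable L {p : Fin 1 → U | p 0 ∈ X} :=
      hXdef.mono (subset_univ _)
    have hbsub : bdry X ⊆ (E : Set U) :=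
      finite_def_subset hcompat hEd ((bdry X).ncard) (bdry X)
        (bdry_finite (hOmin X hXuniv)) (defBdry hcompat hXdef) rfl
    set S := {s : U | b ≤ s ∧ s ≤ t0 ∧ ∀ r, b ≤ r → r ≤ s → r ∈ X} with hSd
    have hSdef : (univ : Set U).Definable L {p : Fin 1 → U | p 0 ∈ S} := by
      have d1 := defPlug (α := Fin 1 ⊕ Fin 2) (defConst (L := L) (mem_univ b)) ![Sum.inr 1]
      have d2 := defPlug (α := Fin 1 ⊕ Fin 2) hLEuniv ![Sum.inr 1, Sum.inr 0]
      have d3 := defPlug (α := Fin 1 ⊕ Fin 2) hLEuniv ![Sum.inr 0, Sum.inl 0]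
      have d4 := (defPlug (α := Fin 1 ⊕ Fin 2) hXuniv ![Sum.inr 0]).compl
      have hT := (defExFin (d1.inter (d2.inter (d3.inter d4)))).compl
      have h := (defGeC hcompat (mem_univ b)).inter ((defLeC hcompat (mem_univ t0)).inter hT)
      convert h using 1
      ext p
      simp only [hSd, mem_setOf_eq, mem_inter_iff, mem_compl_iff, Function.comp_apply,
        Matrix.cons_val_zero, Matrix.cons_val_one, Matrix.head_cons, Sum.elim_inl,
        Sum.elim_inr, not_exists]
      refine and_congr_right fun h1 => and_congr_right fun h2 => ?_
      constructor
      · intro hq w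
        rintro ⟨e1, e2, e3, e4⟩
        exact e4 (hq (w 0) (by rw [← e1]; exact e2) e3)
      · intro hq r hbr hrp
        by_contra hno
        exact hq ![r, b] ⟨rfl, by show b ≤ r; exact hbr, by show r ≤ p 0; exact hrp,
          by show ¬ r ∈ X; exact hno⟩
    have hbS : b ∈ S := ⟨le_refl b, hbt0, fun r h1 h2 => by
      have : r = b := le_antisymm h2 h1
      rwa [this]⟩
    have hbddS : BddAbove S := ⟨t0, fun s hs => hs.2.1⟩
    obtain ⟨w, hw⟩ := hlub S hSdef ⟨b, hbS⟩ hbddS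
    have hbw : b ≤ w := hw.1 hbS
    have hwt0 : w ≤ t0 := hw.2 fun s hs => hs.2.1
    have hwbd : w ∈ bdry X := by
      intro δ hδ
      constructor
      · obtain ⟨s, hsS, hgt⟩ : ∃ s ∈ S, w - δ < s := by
          by_contra hcon
          push_neg at hcon
          have : w ≤ w - δ := hw.2 fun s hs => hcon s hs
          linarith
        have hsw : s ≤ w := hw.1 hsS
        refine ⟨s, ?_, hsS.2.2 s hsS.1 (le_refl s)⟩
        rw [abs_of_nonpos (by linarith)]
        linarith
      · by_cases hcase : ∀ u, b ≤ u → u ≤ w → u ∈ X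
        · have hwlt : w < t0 := by
            rcases eq_or_lt_of_le hwt0 with he | h
            · exact absurd (hcase t0 (by linarith) (le_of_eq he.symm)) ht0X
            · exact h
          set s1 := (w + min t0 (w + δ)) / 2 with hs1d
          have hm : w < min t0 (w + δ) := lt_min hwlt (by linarith)
          have hs1w : w < s1 := by rw [hs1d]; linarith
          have hs1m : s1 < min t0 (w + δ) := by rw [hs1d]; linarith
          have hs1t0 : s1 ≤ t0 := le_of_lt (lt_of_lt_of_le hs1m (min_le_left _ _))
          have hs1δ : s1 < w + δ := lt_of_lt_of_le hs1m (min_le_right _ _)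
          have hs1S : s1 ∉ S := fun hs => absurd (hw.1 hs) (not_le.mpr hs1w)
          have hex : ¬ (∀ r, b ≤ r → r ≤ s1 → r ∈ X) := fun hall =>
            hs1S ⟨by linarith, hs1t0, hall⟩
          push_neg at hex
          obtain ⟨r, hr1, hr2, hr3⟩ := hex
          have hrw : w < r := by
            by_contra hcon
            push_neg at hcon
            exact hr3 (hcase r hr1 hcon)
          exact ⟨r, by rw [abs_of_pos (by linarith)]; linarith, hr3⟩
        · push_neg at hcase
          obtain ⟨u, hu1, hu2, hu3⟩ := hcase
          have hub : ∀ s ∈ S, s ≤ u := by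
            intro s hs
            by_contra hcon
            push_neg at hcon
            exact hu3 (hs.2.2 u hu1 (le_of_lt hcon))
          have hwu : w ≤ u := hw.2 hub
          have huw : u = w := le_antisymm hu2 hwu
          refine ⟨w, by simpa using hδ, by rwa [← huw]⟩
    have hwE : w ∈ E := hbsub hwbd
    have hOw : ∀ o ∈ O, o < w := fun o ho => lt_of_lt_of_le (hb1 o ho) hbw
    have := h2b_lt w hwE hOw
    linarith
  -- derivative graph is E-definable
  have hfD : (E : Set U).Definable L {p : Fin 2 → U | f' (p 0) = p 1} :=
    defDerivGraph hcompat hf hder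
  -- the core quantitative bound
  have core : ∀ K r : U, K ∈ E → r ∈ E → 0 < K → 0 < r → |f b| ≤ r → K ≤ |f' b| →
      b * K ≤ 4 * r := by
    intro K r hKE hrE hK0 hr0 hfb hKd
    have hBdef : (E : Set U).Definable L {p : Fin 1 → U | p 0 ∈ {t : U | |f t| ≤ r}} :=
      defBnd hcompat hf hrE
    have hB2b : ∀ t, b ≤ t → t ≤ 2*b → |f t| ≤ r := fun t h1 h2 =>
      gapI {t : U | |f t| ≤ r} hBdef hfb t h1 h2
    have h2b : b < 2*b := by linarith
    have hf2b : |f (2*b)| ≤ r := hB2b (2*b) (le_of_lt h2b) (le_refl _)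
    have hKK : K/2 < K := by linarith
    rcases le_or_gt K (f' b) with hpos | hneg
    · have hAdef : (E : Set U).Definable L {p : Fin 1 → U | p 0 ∈ {t : U | K ≤ f' t}} :=
        defGeConst hcompat hfD hKE
      have hA : ∀ s, b ≤ s → s ≤ 2*b → K ≤ f' s := fun s h1 h2 =>
        gapI {t : U | K ≤ f' t} hAdef hpos s h1 h2
      have hgrow := growth (L := L) hder h2b hKK hA hlub
        (defGrowthS (A := (univ : Set U)) hcompat (hf.mono (subset_univ _))
          (mem_univ b) (mem_univ (2*b)) (mem_univ (K/2)))
      have hle : f (2*b) - f b ≤ 2 * r := by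
        have l1 : f (2*b) ≤ |f (2*b)| := le_abs_self _
        have l2 : -(f b) ≤ |f b| := neg_le_abs _
        linarith
      nlinarith [hgrow, hle]
    · have hKd' : f' b ≤ -K := by
        rcases abs_cases (f' b) with ⟨h, _⟩ | ⟨h, _⟩
        · linarith
        · linarith
      have hKEneg : -K ∈ E := E.neg_mem hKE
      have hAdef : (E : Set U).Definable L {p : Fin 1 → U | p 0 ∈ {t : U | f' t ≤ -K}} :=
        defLeConst hcompat hfD hKEneg
      have hA : ∀ s, b ≤ s → s ≤ 2*b → f' s ≤ -K := fun s h1 h2 =>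
        gapI {t : U | f' t ≤ -K} hAdef hKd' s h1 h2
      have hA' : ∀ s, b ≤ s → s ≤ 2*b → K ≤ -(f' s) := fun s h1 h2 => by
        have := hA s h1 h2; linarith
      have hSdefNeg : (univ : Set U).Definable L {p : Fin 1 → U | p 0 ∈
          {s : U | b ≤ s ∧ s ≤ 2*b ∧ ∀ r', b ≤ r' → r' ≤ s →
            K/2 * (r' - b) ≤ (fun t => -(f t)) r' - (fun t => -(f t)) b}} := by
        have hx := defGrowthSNeg (A := (univ : Set U)) hcompat (hf.mono (subset_univ _))
          (mem_univ b) (mem_univ (2*b)) (mem_univ (K/2))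
        have hseteq : {p : Fin 1 → U | p 0 ∈
            {s : U | b ≤ s ∧ s ≤ 2*b ∧ ∀ r', b ≤ r' → r' ≤ s →
              K/2 * (r' - b) ≤ (fun t => -(f t)) r' - (fun t => -(f t)) b}} =
            {p : Fin 1 → U | b ≤ p 0 ∧ p 0 ≤ 2*b ∧ ∀ r', b ≤ r' → r' ≤ p 0 →
              K/2 * (r' - b) ≤ f b - f r'} := by
          ext p
          simp only [mem_setOf_eq]
          refine and_congr_right fun _ => and_congr_right fun _ =>
            forall_congr' fun r' => imp_congr_right fun _ => imp_congr_right fun _ => ?_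
          constructor
          · intro h; linarith
          · intro h; linarith
        rw [hseteq]
        exact hx
      have hgrow : K/2 * (2*b - b) ≤ -(f (2*b)) - -(f b) :=
        growth (L := L) (g := fun t => -(f t)) (g' := fun t => -(f' t))
          (fun s => hasODerivAt_neg (hder s)) h2b hKK hA' hlub hSdefNeg
      have hle : f b - f (2*b) ≤ 2 * r := by
        have l1 : f b ≤ |f b| := le_abs_self _
        have l2 : -(f (2*b)) ≤ |f (2*b)| := neg_le_abs _
        linarith
      nlinarith [hgrow, hle]
  -- Dcl membership of f' b
  have hbmem : b ∈ (E : Set U) ∪ {b} := Set.mem_union_right _ rfl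
  have hfD' : ((E : Set U) ∪ {b}).Definable L {p : Fin 2 → U | f' (p 0) = p 1} :=
    hfD.mono subset_union_left
  have hMULb := hcompat.2.2.mono (empty_subset ((E : Set U) ∪ {b}))
  have hf'Dcl : f' b ∈ Dcl L ((E : Set U) ∪ {b}) := by
    show InDcl L ((E : Set U) ∪ {b}) (f' b)
    unfold InDcl DefSet
    have j1 := defPlug (α := Fin 1 ⊕ Fin 1) (defConst (L := L) hbmem) ![Sum.inr 0]
    have j2 := defPlug (α := Fin 1 ⊕ Fin 1) hfD' ![Sum.inr 0, Sum.inl 0]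
    have h := defExFin (j1.inter j2)
    convert h using 1
    ext p
    simp only [mem_setOf_eq, mem_inter_iff, Function.comp_apply, Matrix.cons_val_zero,
      Matrix.cons_val_one, Matrix.head_cons, Sum.elim_inl, Sum.elim_inr,
      mem_singleton_iff]
    constructor
    · intro hp
      exact ⟨![b], rfl, by show f' b = p 0; rw [hp]⟩
    · rintro ⟨w, h1, h2⟩
      rw [← h2, h1]
  -- Dcl is closed under inverses
  have hinvDcl : ∀ y : U, y ≠ 0 → y ∈ Dcl L ((E : Set U) ∪ {b}) →
      y⁻¹ ∈ Dcl L ((E : Set U) ∪ {b}) := by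
    intro y hy hyD
    show InDcl L ((E : Set U) ∪ {b}) y⁻¹
    unfold InDcl DefSet
    have hyD' : ((E : Set U) ∪ {b}).Definable L {p : Fin 1 → U | p 0 ∈ ({y} : Set U)} := hyD
    have h1E : (1:U) ∈ (E : Set U) ∪ {b} := Set.mem_union_left _ E.one_mem
    have i1 := defPlug (α := Fin 1 ⊕ Fin 2) hyD' ![Sum.inr 0]
    have i2 := defPlug (α := Fin 1 ⊕ Fin 2) (defConst (L := L) h1E) ![Sum.inr 1]
    have i3 := defPlug (α := Fin 1 ⊕ Fin 2) hMULb ![Sum.inl 0, Sum.inr 0, Sum.inr 1]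
    have h := defExFin (i1.inter (i2.inter i3))
    convert h using 1
    ext p
    simp only [mem_setOf_eq, mem_inter_iff, Function.comp_apply, Matrix.cons_val_zero,
      Matrix.cons_val_one, Matrix.head_cons, Matrix.cons_val_two, Matrix.tail_cons,
      Sum.elim_inl, Sum.elim_inr, mem_singleton_iff]
    constructor
    · intro hp
      refine ⟨![y, 1], rfl, rfl, ?_⟩
      show p 0 * y = 1
      rw [hp]
      exact inv_mul_cancel₀ hy
    · rintro ⟨w, h1, h2, h3⟩
      rw [h1, h2] at h3
      exact eq_inv_of_mul_eq_one_left h3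
  constructor
  · -- part 1 : the maximal ideal of O_b
    rintro ⟨⟨hfbDcl, hfbsmall⟩, hfb0⟩
    obtain ⟨e0, he0E, hgap0, hbound⟩ : ∃ e0 : U, e0 ∈ E ∧ (∀ o ∈ O, o < e0) ∧
        |f b| ≤ 1/e0 := by
      rcases hfb0 with hz | hinv
      · obtain ⟨e, heE, hgap⟩ := hbase
        have hepos : 0 < e := lt_trans one_pos (hgap_one e heE hgap)
        refine ⟨e, heE, hgap, ?_⟩
        rw [hz, abs_zero]
        positivity
      · have hfbne : f b ≠ 0 := by
          intro hc
          rw [hc, inv_zero] at hinv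
          refine hinv ⟨by rw [← hc]; exact hfbDcl, fun e heE hgap => ?_⟩
          rw [abs_zero]
          linarith [hgap_one e heE hgap]
        have hinvD := hinvDcl (f b) hfbne hfbDcl
        have hne : ¬ ∀ e ∈ (E : Set U), (∀ o ∈ (O : Set U), o < e) → |(f b)⁻¹| < e :=
          fun hall => hinv ⟨hinvD, hall⟩
        push_neg at hne
        obtain ⟨e0, he0E, hgap0, hge⟩ := hne
        have he00 : 0 < e0 := lt_trans one_pos (hgap_one e0 he0E hgap0)
        have hfbpos : 0 < |f b| := abs_pos.mpr hfbne
        refine ⟨e0, he0E, hgap0, ?_⟩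
        rw [abs_inv] at hge
        rw [one_div]
        exact inv_le_swap he00 hfbpos hge
    have he00 : 0 < e0 := lt_trans one_pos (hgap_one e0 he0E hgap0)
    have hr0 : 0 < 1/e0 := by positivity
    have hrE : 1/e0 ∈ E := by rw [one_div]; exact E.inv_mem he0E
    have hsmall : |f' b| < 1/e0 := by
      by_contra hcon
      push_neg at hcon
      have hc4 := core (1/e0) (1/e0) hrE hrE hr0 hr0 hbound hcon
      have hb4 : b ≤ 4 := by
        have h4 := mul_le_mul_of_nonneg_right hc4 (le_of_lt he00)
        rw [mul_assoc, mul_assoc, one_div, inv_mul_cancel₀ (ne_of_gt he00), mul_one,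
          mul_one] at h4
        exact h4
      linarith [hb1 4 h4O]
    have hlt1 : 1/e0 < 1 := (div_lt_one he00).mpr (hgap_one e0 he0E hgap0)
    refine ⟨⟨hf'Dcl, fun e heE hgap => ?_⟩, ?_⟩
    · have h1e : 1 < e := hgap_one e heE hgap
      linarith
    · by_cases hz : f' b = 0
      · exact Or.inl hz
      · refine Or.inr fun hmem => ?_
        obtain ⟨_, hall⟩ := hmem
        have h2 := hall e0 he0E hgap0
        have hp : 0 < |f' b| := abs_pos.mpr hz
        have h3 : e0 < |f' b|⁻¹ := by
          have : |f' b| < e0⁻¹ := by rwa [one_div] at hsmall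
          exact inv_lt_swap hp he00 this
        rw [abs_inv] at h2
        linarith
  · -- part 2 : the maximal ideal of O_b⁻
    rintro ⟨⟨hfbDcl, _⟩, hfb0⟩
    have key : ∀ o : U, o ∈ O → 0 < o → |f b| < 1/o := by
      intro o hoO ho
      rcases hfb0 with hz | hinv
      · rw [hz, abs_zero]
        positivity
      · have hfbne : f b ≠ 0 := by
          intro hc
          rw [hc, inv_zero] at hinv
          exact hinv ⟨by rw [← hc]; exact hfbDcl, ⟨1, h1O, by rw [abs_zero]; exact zero_le_one⟩⟩
        have hinvD := hinvDcl (f b) hfbne hfbDcl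
        have hne : ∀ o' ∈ (O : Set U), ¬ |(f b)⁻¹| ≤ o' := by
          intro o' ho' hle
          exact hinv ⟨hinvD, o', ho', hle⟩
        have h2 := not_le.mp (hne o hoO)
        rw [abs_inv] at h2
        have hp : 0 < |f b| := abs_pos.mpr hfbne
        rw [one_div]
        exact inv_lt_swap ho hp h2
    have claim : ∀ o : U, o ∈ O → 0 < o → |f' b| < 1/o := by
      intro o hoO ho
      by_contra hcon
      push_neg at hcon
      have hKE : 1/o ∈ E := by rw [one_div]; exact E.inv_mem (hOE hoO)
      have hK0 : 0 < 1/o := by positivity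
      have hfb1 : |f b| ≤ 1 := le_of_lt (by simpa using key 1 h1O one_pos)
      have hcore := core (1/o) 1 hKE E.one_mem hK0 one_pos hfb1 hcon
      have hb4 : b ≤ 4*o := by
        have h4 := mul_le_mul_of_nonneg_right hcore (le_of_lt ho)
        have e2 : b * (1/o) * o = b := by field_simp
        rw [e2] at h4
        linarith
      have h4oO : (4:U)*o ∈ O := O.mul_mem h4O hoO
      linarith [hb1 (4*o) h4oO]
    refine ⟨⟨hf'Dcl, ⟨1, h1O, ?_⟩⟩, ?_⟩
    · have := claim 1 h1O one_pos
      rw [div_one] at this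
      exact le_of_lt this
    · by_cases hz : f' b = 0
      · exact Or.inl hz
      · refine Or.inr fun hmem => ?_
        obtain ⟨_, o, hoO, hle⟩ := hmem
        have hp : 0 < |f' b| := abs_pos.mpr hz
        have hinvpos : 0 < |(f' b)⁻¹| := by
          rw [abs_inv]
          positivity
        have ho : 0 < o := lt_of_lt_of_le hinvpos hle
        have h2 := claim o hoO ho
        rw [abs_inv] at hle
        have h4 : o < |f' b|⁻¹ := inv_lt_swap hp ho (by rwa [one_div] at h2)
        linarith
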